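/- For n ≥ 3, the map ψ sending a partition λ = (λ_1, …, λ_l) of n−2 to (λ_1+1, λ_2, …, λ_l, 1) is a bijection from the set of partitions of n−2 onto the set P11(n) of partitions μ of n with smallest part 1 and μ_1 > μ_2, and it satisfies n(ψ(λ)) = n(λ) + l(λ). -/

import Mathlib

/-- The descending list of parts of a partition. -/
def Nat.Partition.descParts {n : ℕ} (P : n.Partition) : List ℕ :=
  (P.parts.sort (· ≤ ·)).reverse

/-- `n(λ) = Σ_{i≥1} (i-1)λ_i` for a partition `λ` listed in decreasing order. -/
def Nat.Partition.nval {n : ℕ} (P : n.Partition) : ℕ :=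
  (List.zipWith (· * ·) (List.range P.descParts.length) P.descParts).sum

/-- `N(n) = Σ_{λ ⊢ n} n(λ)`. -/
def Nfun (n : ℕ) : ℕ := ∑ P : Nat.Partition n, P.nval

/-- `p(n)`, the number of partitions of `n`. -/
def pfun (n : ℕ) : ℕ := Fintype.card (Nat.Partition n)

private lemma multiset_sup_mem (m : Multiset ℕ) (h : m ≠ 0) : m.sup ∈ m := by
  induction m using Multiset.induction with
  | empty => exact absurd rfl h
  | cons a t ih =>
    rw [Multiset.sup_cons]
    rcases eq_or_ne t 0 with rfl | ht
    · simp
    · rcases le_total a t.sup with h1 | h1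
      · rw [sup_eq_right.mpr h1]
        exact Multiset.mem_cons_of_mem (ih ht)
      · rw [sup_eq_left.mpr h1]
        exact Multiset.mem_cons_self a t

private def nvl (l : List ℕ) : ℕ := (List.zipWith (· * ·) (List.range l.length) l).sum

private lemma sum_zip_succ : ∀ (r l : List ℕ),
    (List.zipWith (fun i b => (i + 1) * b) r l).sum
      = (List.zipWith (· * ·) r l).sum + (l.take r.length).sum := by
  intro r
  induction r with
  | nil => intro l; simp
  | cons i r ih =>
    intro l
    cases l with
    | nil => simp
    | cons b l =>
      simp only [List.zipWith_cons_cons, List.sum_cons, List.length_cons, List.take_succ_cons,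
        ih l]
      ring

private lemma nvl_cons (a : ℕ) (l : List ℕ) : nvl (a :: l) = nvl l + l.sum := by
  unfold nvl
  simp only [List.length_cons, List.range_succ_eq_map, List.zipWith_cons_cons,
    List.sum_cons, Nat.zero_mul, Nat.zero_add, List.zipWith_map_left]
  have : (List.zipWith (fun a_1 b => Nat.succ a_1 * b) (List.range l.length) l)
      = List.zipWith (fun i b => (i + 1) * b) (List.range l.length) l := by
    simp [Nat.succ_eq_add_one]
  rw [this, sum_zip_succ, List.length_range, List.take_length]

private lemma nvl_append_singleton (l : List ℕ) (x : ℕ) :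
    nvl (l ++ [x]) = nvl l + l.length * x := by
  unfold nvl
  rw [List.length_append, List.length_singleton, List.range_succ,
    List.zipWith_append (by simp), List.sum_append]
  simp

theorem psi_bijection (n : ℕ) (hn : 3 ≤ n) :
    ∃ ψ : Nat.Partition (n - 2) → Nat.Partition n,
      (∀ P, (ψ P).parts = (P.parts.sup + 1) ::ₘ 1 ::ₘ P.parts.erase P.parts.sup) ∧
      Set.BijOn ψ Set.univ
        {Q : Nat.Partition n | 1 ∈ Q.parts ∧ Q.parts.count Q.parts.sup = 1} ∧
      ∀ P, (ψ P).nval = P.nval + Multiset.card P.parts := by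
  -- basic facts about partitions of n - 2
  have hne : ∀ P : Nat.Partition (n - 2), P.parts ≠ 0 := by
    intro P h
    have := P.parts_sum
    rw [h] at this
    simp at this
    omega
  have hsupmem : ∀ P : Nat.Partition (n - 2), P.parts.sup ∈ P.parts :=
    fun P => multiset_sup_mem _ (hne P)
  have hsup1 : ∀ P : Nat.Partition (n - 2), 1 ≤ P.parts.sup := by
    intro P
    exact le_trans (P.parts_pos (hsupmem P)) (Multiset.le_sup (hsupmem P))
  have hdecomp : ∀ P : Nat.Partition (n - 2),
      P.parts = P.parts.sup ::ₘ P.parts.erase P.parts.sup :=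
    fun P => (Multiset.cons_erase (hsupmem P)).symm
  -- the map
  refine ⟨fun P => ⟨(P.parts.sup + 1) ::ₘ 1 ::ₘ P.parts.erase P.parts.sup, ?_, ?_⟩, fun P => rfl,
    ?_, ?_⟩
  · intro i hi
    rcases Multiset.mem_cons.mp hi with rfl | hi
    · omega
    rcases Multiset.mem_cons.mp hi with rfl | hi
    · omega
    · exact P.parts_pos (Multiset.mem_of_mem_erase hi)
  · have h1 : P.parts.sum = n - 2 := P.parts_sum
    have h2 := hdecomp P
    rw [h2, Multiset.sum_cons] at h1
    simp only [Multiset.sum_cons]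
    omega
  -- sup of the image
  · have himsup : ∀ P : Nat.Partition (n - 2),
        ((P.parts.sup + 1) ::ₘ 1 ::ₘ P.parts.erase P.parts.sup).sup = P.parts.sup + 1 := by
      intro P
      rw [Multiset.sup_cons, Multiset.sup_cons]
      have h1 : (P.parts.erase P.parts.sup).sup ≤ P.parts.sup :=
        Multiset.sup_le.mpr fun x hx => Multiset.le_sup (Multiset.mem_of_mem_erase hx)
      have h2 := hsup1 P
      omega
    constructor
    · -- MapsTo
      intro P _
      constructor
      · exact Multiset.mem_cons_of_mem (Multiset.mem_cons_self 1 _)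
      · rw [himsup P]
        have hne1 : P.parts.sup + 1 ≠ 1 := by have := hsup1 P; omega
        have hnotmem : P.parts.sup + 1 ∉ P.parts.erase P.parts.sup := by
          intro h
          have := Multiset.le_sup (Multiset.mem_of_mem_erase h)
          omega
        rw [Multiset.count_cons_self, Multiset.count_cons_of_ne hne1,
          Multiset.count_eq_zero_of_notMem hnotmem]
    constructor
    · -- InjOn
      intro P _ P' _ h
      have hp : ((P.parts.sup + 1) ::ₘ 1 ::ₘ P.parts.erase P.parts.sup)
          = ((P'.parts.sup + 1) ::ₘ 1 ::ₘ P'.parts.erase P'.parts.sup) :=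
        congrArg Nat.Partition.parts h
      have hs : P.parts.sup = P'.parts.sup := by
        have := congrArg Multiset.sup hp
        rw [himsup P, himsup P'] at this
        omega
      rw [hs] at hp
      have he := (Multiset.cons_inj_right _).mp ((Multiset.cons_inj_right _).mp hp)
      apply Nat.Partition.ext
      rw [hdecomp P, hdecomp P', hs, he]
    · -- SurjOn
      intro Q hQ
      obtain ⟨h1Q, hcQ⟩ := hQ
      set t := Q.parts.sup with ht
      have htmem : t ∈ Q.parts := Multiset.count_pos.mp (by omega)
      have ht1 : 1 ≤ t := le_trans (Q.parts_pos htmem) (Multiset.le_sup htmem)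
      have ht2 : 2 ≤ t := by
        rcases Nat.lt_or_ge t 2 with h | h
        · exfalso
          have hteq : t = 1 := by omega
          have hall : ∀ b ∈ Q.parts, b = 1 := by
            intro b hb
            have := Multiset.le_sup hb
            have := Q.parts_pos hb
            omega
          have hrep := Multiset.eq_replicate_card.mpr hall
          have hsum := Q.parts_sum
          rw [hrep] at hsum hcQ
          rw [Multiset.sum_replicate, smul_eq_mul, mul_one] at hsum
          rw [hteq, Multiset.count_replicate] at hcQ
          simp at hcQ
          omega
        · exact h
      have h1et : (1 : ℕ) ∈ Q.parts.erase t :=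
        Multiset.mem_erase_of_ne (by omega) |>.mpr h1Q
      set R := (Q.parts.erase t).erase 1 with hR
      have hQdecomp : Q.parts = t ::ₘ 1 ::ₘ R := by
        rw [hR, Multiset.cons_erase h1et, Multiset.cons_erase htmem]
      have hRle : ∀ x ∈ R, x ≤ t - 1 := by
        intro x hx
        have hx1 : x ∈ Q.parts.erase t := Multiset.mem_of_mem_erase hx
        have hx2 : x ∈ Q.parts := Multiset.mem_of_mem_erase hx1
        have hxt : x ≤ t := Multiset.le_sup hx2
        have hxne : x ≠ t := by
          intro h
          rw [h] at hx1
          have : Q.parts.count t - 1 = Q.parts.count t - 1 := rfl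
          have hc := Multiset.count_erase_self t Q.parts
          have : t ∈ Q.parts.erase t := hx1
          rw [← Multiset.count_pos, hc] at this
          omega
        omega
      refine ⟨⟨(t - 1) ::ₘ R, ?_, ?_⟩, Set.mem_univ _, ?_⟩
      · intro i hi
        rcases Multiset.mem_cons.mp hi with rfl | hi
        · omega
        · exact Q.parts_pos (hQdecomp ▸ Multiset.mem_cons_of_mem (Multiset.mem_cons_of_mem hi))
      · have hsum := Q.parts_sum
        rw [hQdecomp] at hsum
        simp only [Multiset.sum_cons] at hsum ⊢
        omega
      · apply Nat.Partition.ext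
        show ((((t - 1) ::ₘ R).sup + 1) ::ₘ 1 ::ₘ (((t - 1) ::ₘ R).erase (((t - 1) ::ₘ R).sup)))
          = Q.parts
        have hsupR : ((t - 1) ::ₘ R).sup = t - 1 := by
          rw [Multiset.sup_cons]
          have : R.sup ≤ t - 1 := Multiset.sup_le.mpr hRle
          omega
        rw [hsupR, Multiset.erase_cons_head, hQdecomp]
        congr 1
        omega
  -- the nval identity
  · intro P
    set s := P.parts.sup with hs
    set M := P.parts.erase s with hM
    set E := M.sort (· ≤ ·) with hE
    have hEmem : ∀ x ∈ E, x ∈ P.parts := by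
      intro x hx
      exact Multiset.mem_of_mem_erase ((Multiset.mem_sort _).mp hx)
    have hEle : ∀ x ∈ E, x ≤ s := fun x hx => Multiset.le_sup (hEmem x hx)
    have hEpos : ∀ x ∈ E, 1 ≤ x := fun x hx => P.parts_pos (hEmem x hx)
    have hEsorted : E.Pairwise (· ≤ ·) := Multiset.pairwise_sort _ _
    -- sorted list of P.parts
    have hsortP : P.parts.sort (· ≤ ·) = E ++ [s] := by
      apply List.Perm.eq_of_pairwise' (Multiset.pairwise_sort _ _) ?_ (Multiset.coe_eq_coe.mp ?_)
      · rw [List.pairwise_append]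
        refine ⟨hEsorted, List.pairwise_singleton _ _, fun a ha b hb => ?_⟩
        rw [List.mem_singleton] at hb
        subst hb
        exact hEle a ha
      · rw [Multiset.sort_eq, hE, ← Multiset.coe_add, Multiset.sort_eq,
          Multiset.coe_singleton, add_comm, Multiset.singleton_add]
        exact hdecomp P
    -- sorted list of (ψ P).parts
    have hsortQ : ((s + 1) ::ₘ 1 ::ₘ M).sort (· ≤ ·) = 1 :: (E ++ [s + 1]) := by
      apply List.Perm.eq_of_pairwise' (Multiset.pairwise_sort _ _) ?_ (Multiset.coe_eq_coe.mp ?_)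
      · rw [List.pairwise_cons]
        constructor
        · intro a ha
          rcases List.mem_append.mp ha with h | h
          · exact hEpos a h
          · rw [List.mem_singleton] at h; omega
        · rw [List.pairwise_append]
          refine ⟨hEsorted, List.pairwise_singleton _ _, fun a ha b hb => ?_⟩
          rw [List.mem_singleton] at hb
          subst hb
          have := hEle a ha
          omega
      · rw [Multiset.sort_eq, hE, ← Multiset.cons_coe, ← Multiset.coe_add, Multiset.sort_eq,
          Multiset.coe_singleton, add_comm M {s + 1}, Multiset.singleton_add, Multiset.cons_swap]
    -- descParts
    have hdescP : P.descParts = s :: E.reverse := by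
      rw [Nat.Partition.descParts, hsortP, List.reverse_append]
      simp
    have hdescQ : ∀ Q : Nat.Partition n, Q.parts = (s + 1) ::ₘ 1 ::ₘ M →
        Q.descParts = (s + 1) :: (E.reverse ++ [1]) := by
      intro Q hQ
      rw [Nat.Partition.descParts, hQ, hsortQ]
      simp
    have hcard : Multiset.card P.parts = E.reverse.length + 1 := by
      have : (P.parts.sort (· ≤ ·)).length = Multiset.card P.parts := Multiset.length_sort _
      rw [hsortP] at this
      simp only [List.length_append, List.length_singleton] at this
      rw [← this]
      simp
    have hnval : ∀ {m : ℕ} (Q : Nat.Partition m), Q.nval = nvl Q.descParts := fun _ => rfl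
    rw [hnval, hnval, hdescQ _ rfl, hdescP, hcard, nvl_cons, nvl_cons, nvl_append_singleton,
      List.sum_append]
    simp only [List.sum_singleton]
    omega
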